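/- Let L be a diamond and G a finite MH-homogeneous vertex-uniform L-colored graph containing a pair of vertices with edge color 1. Then any two distinct vertices x, y lying in the same connected component of G satisfy χ(x,y) = 1. -/

import Mathlib

/-- An `L`-colored graph on vertex set `V`: vertex colors and symmetric,
irreflexive edge colors (color `⊥` means "no edge"). -/
structure LGraph (L : Type*) [PartialOrder L] [BoundedOrder L] (V : Type*) where
  vcol : V → L
  ecol : V → V → L
  ecol_irrefl : ∀ x, ecol x x = ⊥
  ecol_symm : ∀ x y, ecol x y = ecol y x

variable {L V : Type*} [PartialOrder L] [BoundedOrder L]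

/-- An endomorphism of an `L`-colored graph weakly increases all colors. -/
def LGraph.IsEndo (G : LGraph L V) (f : V → V) : Prop :=
  (∀ x, G.vcol x ≤ G.vcol (f x)) ∧ (∀ x y, G.ecol x y ≤ G.ecol (f x) (f y))

/-- A homomorphism from the finite induced substructure on `S` into `G`. -/
def LGraph.IsPartialHom (G : LGraph L V) (S : Set V) (f : V → V) : Prop :=
  (∀ x ∈ S, G.vcol x ≤ G.vcol (f x)) ∧
  (∀ x ∈ S, ∀ y ∈ S, G.ecol x y ≤ G.ecol (f x) (f y))

/-- `G` is MH-homogeneous: every monomorphism between finite induced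
substructures extends to an endomorphism. -/
def LGraph.MH (G : LGraph L V) : Prop :=
  ∀ S : Set V, S.Finite → ∀ f : V → V, Set.InjOn f S → G.IsPartialHom S f →
    ∃ g : V → V, G.IsEndo g ∧ ∀ x ∈ S, g x = f x

/-- `G` is HH-homogeneous: every homomorphism between finite induced
substructures extends to an endomorphism. -/
def LGraph.HH (G : LGraph L V) : Prop :=
  ∀ S : Set V, S.Finite → ∀ f : V → V, G.IsPartialHom S f →
    ∃ g : V → V, G.IsEndo g ∧ ∀ x ∈ S, g x = f x

/-- Adjacency: edge color is nonzero. -/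
def LGraph.Adj (G : LGraph L V) (x y : V) : Prop := G.ecol x y ≠ ⊥

/-- Two vertices are connected if joined by a path of edges of nonzero color. -/
def LGraph.Conn (G : LGraph L V) (x y : V) : Prop := Relation.ReflTransGen G.Adj x y

/-- `S` is a connected component of `G`. -/
def LGraph.IsComponent (G : LGraph L V) (S : Set V) : Prop :=
  ∃ x : V, S = {y | G.Conn x y}

/-- All vertices of `G` have the same color. -/
def LGraph.VertexUniform (G : LGraph L V) : Prop := ∃ α : L, ∀ x, G.vcol x = α

/-- `G` restricted to `S` is a uniform `L`-colored graph: all vertices of one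
color and all edges between distinct vertices of one fixed nonzero color. -/
def LGraph.UniformOn (G : LGraph L V) (S : Set V) : Prop :=
  (∃ α : L, ∀ x ∈ S, G.vcol x = α) ∧
  (∃ β : L, ⊥ < β ∧ ∀ x ∈ S, ∀ y ∈ S, x ≠ y → G.ecol x y = β)

/-- `G[S]` is isomorphic to `U(n, α, β)`, the connected uniform graph on `n`
vertices, all colored `α`, with all edges colored `β ≻ ⊥`. -/
def LGraph.IsU (G : LGraph L V) (S : Set V) (n : ℕ) (α β : L) : Prop :=
  S.ncard = n ∧ (∀ x ∈ S, G.vcol x = α) ∧ ⊥ < β ∧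
  (∀ x ∈ S, ∀ y ∈ S, x ≠ y → G.ecol x y = β)

/-- `L` is a diamond: all elements other than `⊥` and `⊤` are pairwise
incomparable. -/
def IsDiamond (L : Type*) [PartialOrder L] [BoundedOrder L] : Prop :=
  ∀ a b : L, a ≠ ⊥ → a ≠ ⊤ → b ≠ ⊥ → b ≠ ⊤ → a ≤ b → a = b

/-- An automorphism of an `L`-colored graph. -/
def LGraph.IsAuto (G : LGraph L V) (f : V → V) : Prop :=
  Function.Bijective f ∧ (∀ x, G.vcol (f x) = G.vcol x) ∧
  (∀ x y, G.ecol (f x) (f y) = G.ecol x y)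

/-- `G` is ultrahomogeneous: every isomorphism between finite induced
substructures extends to an automorphism. -/
def LGraph.Ultra (G : LGraph L V) : Prop :=
  ∀ S : Set V, S.Finite → ∀ f : V → V, Set.InjOn f S →
    (∀ x ∈ S, G.vcol (f x) = G.vcol x) →
    (∀ x ∈ S, ∀ y ∈ S, G.ecol (f x) (f y) = G.ecol x y) →
    ∃ g : V → V, G.IsAuto g ∧ ∀ x ∈ S, g x = f x

section StmtTenProof

variable {L : Type*} [PartialOrder L] [BoundedOrder L]

private lemma LGraph.endo_comp {V : Type*} {G : LGraph L V} {g h : V → V}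
    (hg : G.IsEndo g) (hh : G.IsEndo h) : G.IsEndo (h ∘ g) :=
  ⟨fun x => (hg.1 x).trans (hh.1 (g x)), fun x y => (hg.2 x y).trans (hh.2 (g x) (g y))⟩

private lemma LGraph.endo_iterate {V : Type*} {G : LGraph L V} {g : V → V}
    (hg : G.IsEndo g) (n : ℕ) : G.IsEndo (g^[n]) := by
  induction n with
  | zero => exact ⟨fun x => le_rfl, fun x y => le_rfl⟩
  | succ n ih => rw [Function.iterate_succ]; exact LGraph.endo_comp hg ih

/-- In a finite type, some positive iterate of any self-map is idempotent. -/
private lemma exists_idem_iterate {V : Type*} [Finite V] (f : V → V) :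
    ∃ m, 0 < m ∧ ∀ x, f^[m] (f^[m] x) = f^[m] x := by
  obtain ⟨a, b, hab, hfab⟩ := Finite.exists_ne_map_eq_of_infinite (fun n : ℕ => f^[n])
  suffices h : ∀ i j : ℕ, i < j → f^[i] = f^[j] →
      ∃ m, 0 < m ∧ ∀ x, f^[m] (f^[m] x) = f^[m] x by
    rcases lt_or_gt_of_ne hab with h' | h'
    · exact h a b h' hfab
    · exact h b a h' hfab.symm
  intro i j hij hf
  set d := j - i with hd
  have hd1 : 0 < d := by omega
  have hstep : ∀ n, i ≤ n → f^[n + d] = f^[n] := by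
    intro n hn
    induction n, hn using Nat.le_induction with
    | base =>
      have hidj : i + d = j := by omega
      rw [hidj]; exact hf.symm
    | succ n hn ihn =>
      have e1 : n + 1 + d = (n + d) + 1 := by omega
      rw [e1, Function.iterate_succ, ihn, ← Function.iterate_succ]
  have hmul : ∀ k n, i ≤ n → f^[n + k * d] = f^[n] := by
    intro k
    induction k with
    | zero => intro n hn; simp
    | succ k ihk =>
      intro n hn
      have e1 : n + (k + 1) * d = (n + k * d) + d := by
        rw [Nat.succ_mul]; omega
      rw [e1, hstep _ (le_trans hn (Nat.le_add_right _ _)), ihk n hn]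
  have him : i ≤ (i + 1) * d := by
    have h1 : (i + 1) * 1 ≤ (i + 1) * d := Nat.mul_le_mul_left (i + 1) hd1
    omega
  refine ⟨(i + 1) * d, Nat.mul_pos (Nat.succ_pos i) hd1, fun x => ?_⟩
  calc f^[(i+1)*d] (f^[(i+1)*d] x) = f^[(i+1)*d + (i+1)*d] x :=
        (Function.iterate_add_apply f ((i+1)*d) ((i+1)*d) x).symm
    _ = f^[(i+1)*d] x := by rw [hmul (i+1) ((i+1)*d) him]

private lemma iterate_not_inj {V : Type*} {f : V → V}
    (h : ¬ Function.Injective f) {m : ℕ} (hm : 0 < m) : ¬ Function.Injective f^[m] := by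
  obtain ⟨m', rfl⟩ := Nat.exists_eq_succ_of_ne_zero hm.ne'
  rw [Function.iterate_succ]
  exact fun hi => h (Function.Injective.of_comp hi)

/-- A bijective endomorphism of a finite L-graph preserves edge colors. -/
private lemma LGraph.bij_pres {V : Type*} [Finite V] {G : LGraph L V} {g : V → V}
    (hg : G.IsEndo g) (hb : Function.Bijective g) (x y : V) :
    G.ecol (g x) (g y) = G.ecol x y := by
  obtain ⟨m, hm, hid⟩ := exists_idem_iterate g
  have hinj : Function.Injective g^[m] := hb.injective.iterate m
  have hgm : ∀ z, g^[m] z = z := fun z => hinj (hid z)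
  obtain ⟨m', rfl⟩ := Nat.exists_eq_succ_of_ne_zero hm.ne'
  refine le_antisymm ?_ (hg.2 x y)
  have h1 : G.ecol (g x) (g y) ≤ G.ecol (g^[m'] (g x)) (g^[m'] (g y)) :=
    (LGraph.endo_iterate hg m').2 _ _
  rw [← Function.iterate_succ_apply, ← Function.iterate_succ_apply, hgm, hgm] at h1
  exact h1

/-- Main work lemma, by induction on the cardinality of the vertex set. -/
private lemma good_aux {L : Type u} [PartialOrder L] [BoundedOrder L] :
    ∀ (n : ℕ) (V : Type v) [Finite V], Nat.card V ≤ n →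
    ∀ (G : LGraph L V), G.MH → G.VertexUniform →
    ∀ x0 y0 : V, G.ecol x0 y0 = ⊤ →
    ∀ x y : V, x ≠ y → G.Conn x y → G.ecol x y = ⊤ := by
  intro n
  induction n with
  | zero =>
    intro V _ hcard G hMH hVU x0 y0 h1 x y hxy hconn
    rcases Nat.card_eq_zero.mp (Nat.le_zero.mp hcard) with h | h
    · exact (h.false x).elim
    · exact absurd h (by have : Finite V := inferInstance; exact fun hi => @not_finite V hi this)
  | succ n ih =>
    intro V _ hcard G hMH hVU x0 y0 h1 x y hxy hconn
    classical
    by_cases hbt : (⊥ : L) = ⊤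
    · exact le_antisymm le_top (hbt ▸ bot_le)
    obtain ⟨α, hα⟩ := hVU
    -- every vertex has a ⊤-neighbor
    have top_nbr : ∀ p : V, ∃ t, G.ecol p t = ⊤ ∧ t ≠ p := by
      intro p
      obtain ⟨g, hg, hgx0⟩ := hMH {x0} (Set.toFinite _) (fun _ => p)
        (fun a ha b hb _ => by
          rw [Set.mem_singleton_iff] at ha hb; rw [ha, hb])
        ⟨fun v _ => by rw [hα, hα], fun a ha b hb => by
          rw [Set.mem_singleton_iff] at ha hb
          rw [ha, hb, G.ecol_irrefl]; exact bot_le⟩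
      have hgp : g x0 = p := hgx0 x0 rfl
      have htop : (⊤ : L) ≤ G.ecol p (g y0) := by
        have := hg.2 x0 y0
        rw [h1, hgp] at this; exact this
      refine ⟨g y0, le_antisymm le_top htop, fun h => hbt ?_⟩
      rw [h] at htop
      rw [G.ecol_irrefl] at htop
      exact le_antisymm bot_le htop
    -- extension of a map on a pair
    have pair_endo : ∀ p q p' q' : V, p ≠ q → p' ≠ q' → G.ecol p q ≤ G.ecol p' q' →
        ∃ g, G.IsEndo g ∧ g p = p' ∧ g q = q' := by
      intro p q p' q' hpq hp'q' hle
      set f : V → V := fun v => if v = p then p' else q' with hfdef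
      have hfp : f p = p' := by simp [hfdef]
      have hfq : f q = q' := by simp [hfdef, hpq.symm]
      have hmem2 : ∀ a ∈ ({p, q} : Set V), a = p ∨ a = q := by
        intro a ha
        rcases ha with ha | ha
        · exact Or.inl ha
        · rw [Set.mem_singleton_iff] at ha; exact Or.inr ha
      obtain ⟨g, hg, hext⟩ := hMH {p, q} (Set.toFinite _) f
        (by
          intro a ha b hb hab
          rcases hmem2 a ha with ha' | ha' <;> rcases hmem2 b hb with hb' | hb' <;>
            rw [ha', hb'] at hab ⊢ <;> simp only [hfp, hfq] at hab <;>
            first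
              | rfl
              | exact absurd hab hp'q'
              | exact absurd hab.symm hp'q')
        ⟨fun v _ => by rw [hα, hα], by
          intro a ha b hb
          rcases hmem2 a ha with ha' | ha' <;> rcases hmem2 b hb with hb' | hb' <;>
            rw [ha', hb'] <;> simp only [hfp, hfq] <;>
            first
              | exact le_rfl
              | exact hle
              | (rw [G.ecol_irrefl]; exact bot_le)
              | (rw [G.ecol_symm q p, G.ecol_symm q' p']; exact hle)⟩
      exact ⟨g, hg, by rw [hext p (by simp), hfp], by rw [hext q (by simp), hfq]⟩
    -- extension of a map fixing p, q and sending u to v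
    have triple_endo : ∀ p q u v : V, p ≠ q → u ≠ p → u ≠ q → v ≠ p → v ≠ q →
        G.ecol p u ≤ G.ecol p v → G.ecol q u ≤ G.ecol q v →
        ∃ k, G.IsEndo k ∧ k p = p ∧ k q = q ∧ k u = v := by
      intro p q u v hpq hup huq hvp hvq h1' h2'
      set f : V → V := fun w => if w = p then p else if w = q then q else v with hfdef
      have hfp : f p = p := by simp [hfdef]
      have hfq : f q = q := by simp [hfdef, hpq.symm]
      have hfu : f u = v := by simp [hfdef, hup, huq]
      have hmem : ∀ a ∈ ({p, q, u} : Set V), a = p ∨ a = q ∨ a = u := by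
        intro a ha
        rcases ha with rfl | ha
        · exact Or.inl rfl
        · rcases ha with rfl | ha
          · exact Or.inr (Or.inl rfl)
          · rw [Set.mem_singleton_iff] at ha; exact Or.inr (Or.inr ha)
      obtain ⟨k, hk, hext⟩ := hMH {p, q, u} (Set.toFinite _) f
        (by
          intro a ha b hb hab
          rcases hmem a ha with ha' | ha' | ha' <;> rcases hmem b hb with hb' | hb' | hb' <;>
            rw [ha', hb'] at hab ⊢ <;>
            simp only [hfp, hfq, hfu] at hab <;>
            first
              | rfl
              | exact hab
              | exact absurd hab.symm hvp
              | exact absurd hab.symm hvq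
              | exact absurd hab hvp
              | exact absurd hab hvq)
        ⟨fun w _ => by rw [hα, hα], by
          intro a ha b hb
          rcases hmem a ha with ha' | ha' | ha' <;> rcases hmem b hb with hb' | hb' | hb' <;>
            rw [ha', hb'] <;> simp only [hfp, hfq, hfu] <;>
            first
              | exact le_rfl
              | exact h1'
              | exact h2'
              | (rw [G.ecol_irrefl]; exact bot_le)
              | (rw [G.ecol_symm u p, G.ecol_symm v p]; exact h1')
              | (rw [G.ecol_symm u q, G.ecol_symm v q]; exact h2')⟩
      exact ⟨k, hk, by rw [hext p (by simp), hfp], by rw [hext q (by simp), hfq],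
        by rw [hext u (by simp), hfu]⟩
    -- H1: an endomorphism fixing a bad pair is bijective
    have H1 : ∀ p q : V, p ≠ q → G.Conn p q → G.ecol p q ≠ ⊤ →
        ∀ k, G.IsEndo k → k p = p → k q = q → Function.Bijective k := by
      intro p q hpq hco hne k hk hkp hkq
      by_contra hnb
      have hki : ¬ Function.Injective k := fun h => hnb (Finite.injective_iff_bijective.mp h)
      obtain ⟨m, hm, hid⟩ := exists_idem_iterate k
      set e := k^[m] with hedef
      have heE : G.IsEndo e := LGraph.endo_iterate hk m
      have hep : e p = p := Function.iterate_fixed hkp m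
      have heq : e q = q := Function.iterate_fixed hkq m
      have hei : ¬ Function.Injective e := iterate_not_inj hki hm
      have hes : ¬ Function.Surjective e := fun h => hei (Finite.injective_iff_surjective.mpr h)
      set R : Set V := Set.range e with hRdef
      have hfix : ∀ w ∈ R, e w = w := by rintro w ⟨z, rfl⟩; exact hid z
      have hRne : R ≠ Set.univ := by
        intro hu
        exact hes (fun w => by
          have : w ∈ R := hu ▸ Set.mem_univ w
          exact this)
      set G' : LGraph L ↥R :=
        { vcol := fun a => G.vcol ↑a
          ecol := fun a b => G.ecol ↑a ↑b
          ecol_irrefl := fun a => G.ecol_irrefl ↑a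
          ecol_symm := fun a b => G.ecol_symm ↑a ↑b } with hG'def
      have hMH' : G'.MH := by
        intro S' hS' f' hf' hhom'
        set ft : V → V := fun w => if h : w ∈ R then ((f' ⟨w, h⟩ : ↥R) : V) else w with hftdef
        have hftval : ∀ b : ↥R, ft ↑b = ↑(f' b) := by
          intro b
          show (if h : (b : V) ∈ R then ((f' ⟨↑b, h⟩ : ↥R) : V) else ↑b) = ↑(f' b)
          rw [dif_pos b.2, Subtype.coe_eta]
        obtain ⟨g, hg, hgext⟩ := hMH (Subtype.val '' S') (hS'.image _) ft
          (by
            rintro a ⟨a', ha', rfl⟩ b ⟨b', hb', rfl⟩ hab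
            rw [hftval, hftval] at hab
            exact congrArg Subtype.val (hf' ha' hb' (Subtype.coe_injective hab)))
          ⟨by
            rintro a ⟨a', ha', rfl⟩
            rw [hftval]
            exact hhom'.1 a' ha',
           by
            rintro a ⟨a', ha', rfl⟩ b ⟨b', hb', rfl⟩
            rw [hftval, hftval]
            exact hhom'.2 a' ha' b' hb'⟩
        refine ⟨fun b => ⟨e (g ↑b), Set.mem_range_self _⟩,
          ⟨fun b => (hg.1 ↑b).trans (heE.1 (g ↑b)),
           fun a b => (hg.2 ↑a ↑b).trans (heE.2 (g ↑a) (g ↑b))⟩, ?_⟩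
        intro b hb
        have h1' : g ↑b = ft ↑b := hgext ↑b ⟨b, hb, rfl⟩
        have h2' : ft ↑b = ↑(f' b) := hftval b
        have h3' : e ↑(f' b) = ↑(f' b) := hfix _ (f' b).2
        refine Subtype.ext ?_
        show e (g ↑b) = ↑(f' b)
        rw [h1', h2', h3']
      have hVU' : G'.VertexUniform := ⟨α, fun b => hα ↑b⟩
      have hx0' : e x0 ∈ R := Set.mem_range_self _
      have hy0' : e y0 ∈ R := Set.mem_range_self _
      have h1'top : G'.ecol ⟨e x0, hx0'⟩ ⟨e y0, hy0'⟩ = ⊤ := by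
        refine le_antisymm le_top ?_
        have := heE.2 x0 y0
        rw [h1] at this; exact this
      have hcR : Nat.card ↥R ≤ n := by
        have e1 : Nat.card ↥R = R.ncard := Nat.card_coe_set_eq R
        have e2 : R.ncard < (Set.univ : Set V).ncard :=
          Set.ncard_lt_ncard (Set.ssubset_univ_iff.mpr hRne) Set.finite_univ
        have e3 : (Set.univ : Set V).ncard = Nat.card V := Set.ncard_univ V
        omega
      have hpR : p ∈ R := ⟨p, hep⟩
      have hqR : q ∈ R := ⟨q, heq⟩
      have hconn' : G'.Conn ⟨p, hpR⟩ ⟨q, hqR⟩ := by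
        have hlift := Relation.ReflTransGen.lift (r := G.Adj) (p := G'.Adj)
          (fun w => (⟨e w, Set.mem_range_self w⟩ : ↥R))
          (fun a b hab => fun hbot =>
            hab (le_antisymm (hbot ▸ heE.2 a b) bot_le)) _ _ hco
        have hlift2 : G'.Conn ⟨e p, Set.mem_range_self p⟩ ⟨e q, Set.mem_range_self q⟩ :=
          hlift
        have ep' : (⟨e p, Set.mem_range_self p⟩ : ↥R) = ⟨p, hpR⟩ := Subtype.ext hep
        have eq' : (⟨e q, Set.mem_range_self q⟩ : ↥R) = ⟨q, hqR⟩ := Subtype.ext heq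
        rwa [ep', eq'] at hlift2
      have hne' : (⟨p, hpR⟩ : ↥R) ≠ ⟨q, hqR⟩ :=
        fun h => hpq (congrArg Subtype.val h)
      exact hne (ih ↥R hcR G' hMH' hVU' ⟨e x0, hx0'⟩ ⟨e y0, hy0'⟩ h1'top
        ⟨p, hpR⟩ ⟨q, hqR⟩ hne' hconn')
    -- H2: domination rules around a bad pair
    have H2 : ∀ p q : V, p ≠ q → G.Conn p q → G.ecol p q ≠ ⊤ →
        ∀ u, u ≠ p → u ≠ q →
        ((G.ecol p u = ⊤ → G.ecol q u = ⊥) ∧ (G.ecol q u = ⊥ → G.ecol p u = ⊤)) := by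
      intro p q hpq hco hne
      obtain ⟨t, htc, htp⟩ := top_nbr p
      have htq : t ≠ q := fun h => hne (h ▸ htc)
      obtain ⟨k1, hk1, hk1p, hk1q⟩ := pair_endo p q p t hpq (Ne.symm htp) (htc ▸ le_top)
      have hk1nb : ¬ Function.Bijective k1 := by
        intro hb
        apply hne
        have hpres := LGraph.bij_pres hk1 hb p q
        rw [hk1p, hk1q, htc] at hpres
        exact hpres.symm
      have hk1ni : ¬ Function.Injective k1 :=
        fun h => hk1nb (Finite.injective_iff_bijective.mp h)
      obtain ⟨m, hm, hid⟩ := exists_idem_iterate k1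
      set e1 := k1^[m] with he1def
      have he1E : G.IsEndo e1 := LGraph.endo_iterate hk1 m
      have he1p : e1 p = p := Function.iterate_fixed hk1p m
      have he1ni : ¬ Function.Injective e1 := iterate_not_inj hk1ni hm
      set y' := e1 q with hy'def
      have hy'q : y' ≠ q := by
        intro h
        have hbij := H1 p q hpq hco hne e1 he1E he1p h
        exact he1ni hbij.injective
      have hy'bot : G.ecol q y' = ⊥ := by
        refine le_antisymm ?_ bot_le
        have h1' := he1E.2 q y'
        have h2' : e1 y' = y' := hid q
        rw [h2'] at h1'
        show G.ecol q y' ≤ ⊥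
        calc G.ecol q y' ≤ G.ecol (e1 q) y' := h1'
          _ = ⊥ := G.ecol_irrefl y'
      have hy'top : G.ecol p y' = ⊤ := by
        have horb : ∀ j : ℕ, G.ecol p (k1^[j+1] q) = ⊤ := by
          intro j
          induction j with
          | zero => simpa [hk1q] using htc
          | succ j ihj =>
            have step := hk1.2 p (k1^[j+1] q)
            rw [hk1p, ihj] at step
            have hit : k1 (k1^[j+1] q) = k1^[j+1+1] q :=
              (Function.iterate_succ_apply' k1 (j+1) q).symm
            rw [hit] at step
            exact le_antisymm le_top step
        obtain ⟨m', rfl⟩ := Nat.exists_eq_succ_of_ne_zero hm.ne'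
        exact horb m'
      have hy'p : y' ≠ p := by
        intro h
        rw [h, G.ecol_irrefl] at hy'top
        exact hbt hy'top
      intro u hup huq
      constructor
      · intro hpu
        by_contra hqu
        obtain ⟨k, hk, hkp, hkq, hky⟩ := triple_endo p q y' u hpq hy'p hy'q hup huq
          (by rw [hy'top, hpu]) (by rw [hy'bot]; exact bot_le)
        have hbij := H1 p q hpq hco hne k hk hkp hkq
        have hpres := LGraph.bij_pres hk hbij q y'
        rw [hkq, hky, hy'bot] at hpres
        exact hqu hpres
      · intro hqu
        by_contra hpu
        obtain ⟨k, hk, hkp, hkq, hku⟩ := triple_endo p q u y' hpq hup huq hy'p hy'q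
          (by rw [hy'top]; exact le_top) (by rw [hqu]; exact bot_le)
        have hbij := H1 p q hpq hco hne k hk hkp hkq
        have hpres := LGraph.bij_pres hk hbij p u
        rw [hkp, hku] at hpres
        rw [← hpres, hy'top] at hpu
        exact hpu rfl
    -- symmetry of connectivity
    have conn_symm : ∀ {a b : V}, G.Conn a b → G.Conn b a := by
      have hadj : Symmetric G.Adj := by
        intro a b h
        show G.ecol b a ≠ ⊥
        rw [G.ecol_symm b a]
        exact h
      intro a b h
      exact (haveI : Std.Symm G.Adj := ⟨hadj⟩; Relation.ReflTransGen.symmetric.symm _ _ h)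
    -- H3: no adjacent bad pair
    have H3 : ∀ p q : V, p ≠ q → G.Conn p q → G.ecol p q ≠ ⊤ → G.ecol p q = ⊥ := by
      intro p q hpq hco hne
      by_contra hc
      obtain ⟨s, hsc, hsq⟩ := top_nbr q
      have hsp : s ≠ p := by
        intro h
        apply hne
        rw [G.ecol_symm p q, ← h]
        exact hsc
      have hco' : G.Conn q p := conn_symm hco
      have hne' : G.ecol q p ≠ ⊤ := by rw [G.ecol_symm q p]; exact hne
      have hps_bot : G.ecol p s = ⊥ :=
        (H2 q p hpq.symm hco' hne' s hsq hsp).1 hsc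
      have hconn_ps : G.Conn p s :=
        Relation.ReflTransGen.tail hco (by
          show G.ecol q s ≠ ⊥
          rw [hsc]; exact fun h => hbt h.symm)
      have hconn_sp : G.Conn s p := conn_symm hconn_ps
      have hne_sp : G.ecol s p ≠ ⊤ := by
        rw [G.ecol_symm s p, hps_bot]
        exact hbt
      have hfinal : G.ecol p q = ⊥ :=
        (H2 s p hsp hconn_sp hne_sp q hsq.symm hpq.symm).1
          (by rw [G.ecol_symm s q]; exact hsc)
      exact hc hfinal
    -- H4: conclude along the path
    have H4 : ∀ z : V, G.Conn x z → z = x ∨ G.ecol x z = ⊤ := by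
      intro z hz
      induction hz with
      | refl => exact Or.inl rfl
      | @tail b c hxb hbc ihb =>
        by_cases hcx : c = x
        · exact Or.inl hcx
        right
        rcases ihb with hbx | hxb_top
        · by_contra hne2
          rw [hbx] at hbc
          have hconn_xc : G.Conn x c := Relation.ReflTransGen.single hbc
          have := H3 x c (Ne.symm hcx) hconn_xc hne2
          exact hbc this
        · by_cases hcb : c = b
          · rw [hcb]; exact hxb_top
          by_contra hne2
          have hconn_xc : G.Conn x c := Relation.ReflTransGen.tail hxb hbc
          have hbx : b ≠ x := by
            intro h
            rw [h, G.ecol_irrefl] at hxb_top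
            exact hbt hxb_top
          have hcb_bot : G.ecol c b = ⊥ :=
            (H2 x c (Ne.symm hcx) hconn_xc hne2 b hbx (fun h => hcb h.symm)).1 hxb_top
          apply hbc
          rw [G.ecol_symm b c]
          exact hcb_bot
    rcases H4 y hconn with rfl | h
    · exact absurd rfl hxy
    · exact h

end StmtTenProof

/-- Lemma 4(3). -/
theorem stmt10 {L V : Type*} [PartialOrder L] [BoundedOrder L] [Finite V]
    (hL : IsDiamond L) (G : LGraph L V) (hMH : G.MH) (hVU : G.VertexUniform)
    (x0 y0 : V) (h1 : G.ecol x0 y0 = ⊤) :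
    ∀ x y : V, x ≠ y → G.Conn x y → G.ecol x y = ⊤ := by
  intro x y hxy hconn
  exact good_aux (Nat.card V) V le_rfl G hMH hVU x0 y0 h1 x y hxy hconn
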